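/- Simplifying equalities: let α₁,α₂ ∈ ℂ, let t₁,t₂ be pure terms and s⃗₁,s⃗₂ term distributions such that α₁·t₁ + s⃗₁ ≡ α₂·t₂ + s⃗₂. Then: (1) if t₁ = t₂ = t and α₁ = α₂, then s⃗₁ ≡ s⃗₂, or s⃗₁ ≡ s⃗₂ + 0·t, or s⃗₂ ≡ s⃗₁ + 0·t; (2) if t₁ = t₂ = t but α₁ ≠ α₂, then s⃗₁ ≡ s⃗₂ + (α₂−α₁)·t or s⃗₂ ≡ s⃗₁ + (α₁−α₂)·t; (3) if t₁ ≠ t₂, then there exists a term distribution s⃗₃ with s⃗₁ ≡ s⃗₃ + α₂·t₂ and s⃗₂ ≡ s⃗₃ + α₁·t₁ (all disjunctions inclusive). -/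

import Mathlib

namespace LinAlg

/-! ### Syntax: pure values, pure terms, term distributions -/

mutual
inductive Val : Type where
  | var : ℕ → Val
  | lam : ℕ → Distr → Val
  | star : Val
  | pair : Val → Val → Val
  | inl : Val → Val
  | inr : Val → Val
inductive Term : Type where
  | val : Val → Term
  | app : Term → Term → Term
  | seq : Term → Distr → Term
  | letp : ℕ → ℕ → Term → Distr → Term
  | matc : Term → ℕ → Distr → ℕ → Distr → Term
inductive Distr : Type where
  | zero : Distr
  | single : Term → Distr
  | add : Distr → Distr → Distr
  | smul : ℂ → Distr → Distr
end

noncomputable instance : DecidableEq Val := fun _ _ => Classical.dec _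
noncomputable instance : DecidableEq Term := fun _ _ => Classical.dec _
noncomputable instance : DecidableEq Distr := fun _ _ => Classical.dec _

/-! ### The shallow congruence ≡ on term distributions -/

inductive Cong : Distr → Distr → Prop where
  | addZero (d : Distr) : Cong (d.add .zero) d
  | oneSmul (d : Distr) : Cong (Distr.smul 1 d) d
  | smulSmul (a b : ℂ) (d : Distr) : Cong (Distr.smul a (Distr.smul b d)) (Distr.smul (a * b) d)
  | addComm (d₁ d₂ : Distr) : Cong (d₁.add d₂) (d₂.add d₁)
  | addAssoc (d₁ d₂ d₃ : Distr) : Cong ((d₁.add d₂).add d₃) (d₁.add (d₂.add d₃))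
  | smulDistrib (a b : ℂ) (d : Distr) : Cong (Distr.smul (a + b) d) ((Distr.smul a d).add (Distr.smul b d))
  | smulAdd (a : ℂ) (d₁ d₂ : Distr) : Cong (Distr.smul a (d₁.add d₂)) ((Distr.smul a d₁).add (Distr.smul a d₂))
  | refl (d : Distr) : Cong d d
  | symm {d₁ d₂ : Distr} : Cong d₁ d₂ → Cong d₂ d₁
  | trans {d₁ d₂ d₃ : Distr} : Cong d₁ d₂ → Cong d₂ d₃ → Cong d₁ d₃
  | addCongr {d₁ d₁' d₂ d₂' : Distr} : Cong d₁ d₁' → Cong d₂ d₂' → Cong (d₁.add d₂) (d₁'.add d₂')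
  | smulCongr (a : ℂ) {d d' : Distr} : Cong d d' → Cong (Distr.smul a d) (Distr.smul a d')

/-! ### Free variables -/

mutual
def fvV : Val → Finset ℕ
  | .var y => {y}
  | .lam y b => fvD b \ {y}
  | .star => ∅
  | .pair v₁ v₂ => fvV v₁ ∪ fvV v₂
  | .inl v => fvV v
  | .inr v => fvV v
def fvT : Term → Finset ℕ
  | .val v => fvV v
  | .app s t => fvT s ∪ fvT t
  | .seq t s => fvT t ∪ fvD s
  | .letp y z t s => fvT t ∪ (fvD s \ {y, z})
  | .matc t y s₁ z s₂ => fvT t ∪ (fvD s₁ \ {y}) ∪ (fvD s₂ \ {z})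
def fvD : Distr → Finset ℕ
  | .zero => ∅
  | .single t => fvT t
  | .add d₁ d₂ => fvD d₁ ∪ fvD d₂
  | .smul _ d => fvD d
end

/-! ### Pure substitution -/

mutual
def substV (x : ℕ) (w : Val) : Val → Val
  | .var y => if y = x then w else .var y
  | .lam y b => if y = x then .lam y b else .lam y (substD x w b)
  | .star => .star
  | .pair v₁ v₂ => .pair (substV x w v₁) (substV x w v₂)
  | .inl v => .inl (substV x w v)
  | .inr v => .inr (substV x w v)
def substT (x : ℕ) (w : Val) : Term → Term
  | .val v => .val (substV x w v)
  | .app s t => .app (substT x w s) (substT x w t)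
  | .seq t s => .seq (substT x w t) (substD x w s)
  | .letp y z t s =>
      .letp y z (substT x w t) (if y = x ∨ z = x then s else substD x w s)
  | .matc t y s₁ z s₂ =>
      .matc (substT x w t) y (if y = x then s₁ else substD x w s₁)
        z (if z = x then s₂ else substD x w s₂)
def substD (x : ℕ) (w : Val) : Distr → Distr
  | .zero => .zero
  | .single t => .single (substT x w t)
  | .add d₁ d₂ => .add (substD x w d₁) (substD x w d₂)
  | .smul a d => .smul a (substD x w d)
end

/-! ### Linear extensions of the syntactic constructs -/

def appTD (s : Term) : Distr → Distr
  | .zero => .zero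
  | .single t => .single (.app s t)
  | .add d₁ d₂ => .add (appTD s d₁) (appTD s d₂)
  | .smul a d => .smul a (appTD s d)

def appDV : Distr → Val → Distr
  | .zero, _ => .zero
  | .single t, v => .single (.app t (.val v))
  | .add d₁ d₂, v => .add (appDV d₁ v) (appDV d₂ v)
  | .smul a d, v => .smul a (appDV d v)

def seqD : Distr → Distr → Distr
  | .zero, _ => .zero
  | .single t, s => .single (.seq t s)
  | .add d₁ d₂, s => .add (seqD d₁ s) (seqD d₂ s)
  | .smul a d, s => .smul a (seqD d s)

def letpD (x y : ℕ) : Distr → Distr → Distr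
  | .zero, _ => .zero
  | .single t, s => .single (.letp x y t s)
  | .add d₁ d₂, s => .add (letpD x y d₁ s) (letpD x y d₂ s)
  | .smul a d, s => .smul a (letpD x y d s)

def matcD : Distr → ℕ → Distr → ℕ → Distr → Distr
  | .zero, _, _, _, _ => .zero
  | .single t, y, s₁, z, s₂ => .single (.matc t y s₁ z s₂)
  | .add d₁ d₂, y, s₁, z, s₂ => .add (matcD d₁ y s₁ z s₂) (matcD d₂ y s₁ z s₂)
  | .smul a d, y, s₁, z, s₂ => .smul a (matcD d y s₁ z s₂)

/-- Bilinear application of distributions:  (Σᵢ αᵢ·tᵢ)(Σⱼ βⱼ·sⱼ) = Σᵢⱼ αᵢβⱼ·(tᵢ sⱼ). -/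
def appD : Distr → Distr → Distr
  | .zero, _ => .zero
  | .single t, w => appTD t w
  | .add d₁ d₂, w => .add (appD d₁ w) (appD d₂ w)
  | .smul a d, w => .smul a (appD d w)

/-- Bilinear substitution  d⟨x := w⃗⟩ = Σⱼ βⱼ · d[x := wⱼ]  (recursion on the value
distribution w⃗; non-value summands are junk and are sent to 0⃗). -/
def bsubst (x : ℕ) (d : Distr) : Distr → Distr
  | .zero => .zero
  | .single (.val w) => substD x w d
  | .single _ => .zero
  | .add w₁ w₂ => .add (bsubst x d w₁) (bsubst x d w₂)
  | .smul a w => .smul a (bsubst x d w)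

/-! ### Evaluation -/

inductive Atom : Term → Distr → Prop where
  | beta (x : ℕ) (b : Distr) (v : Val) :
      Atom (.app (.val (.lam x b)) (.val v)) (substD x v b)
  | seqStar (s : Distr) : Atom (.seq (.val .star) s) s
  | letPair (x y : ℕ) (v w : Val) (s : Distr) :
      Atom (.letp x y (.val (.pair v w)) s) (substD y w (substD x v s))
  | matchInl (v : Val) (y : ℕ) (s₁ : Distr) (z : ℕ) (s₂ : Distr) :
      Atom (.matc (.val (.inl v)) y s₁ z s₂) (substD y v s₁)
  | matchInr (v : Val) (y : ℕ) (s₁ : Distr) (z : ℕ) (s₂ : Distr) :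
      Atom (.matc (.val (.inr v)) y s₁ z s₂) (substD z v s₂)
  | appR (s : Term) {t : Term} {d : Distr} : Atom t d → Atom (.app s t) (appTD s d)
  | appL (v : Val) {t : Term} {d : Distr} : Atom t d → Atom (.app t (.val v)) (appDV d v)
  | seqC (s : Distr) {t : Term} {d : Distr} : Atom t d → Atom (.seq t s) (seqD d s)
  | letC (x y : ℕ) (s : Distr) {t : Term} {d : Distr} :
      Atom t d → Atom (.letp x y t s) (letpD x y d s)
  | matcC (y : ℕ) (s₁ : Distr) (z : ℕ) (s₂ : Distr) {t : Term} {d : Distr} :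
      Atom t d → Atom (.matc t y s₁ z s₂) (matcD d y s₁ z s₂)

/-- One-step evaluation:  t⃗ ≻ t⃗′. -/
def Step (d d' : Distr) : Prop :=
  ∃ (a : ℂ) (s : Term) (s' r : Distr),
    Cong d (Distr.add (.smul a (.single s)) r) ∧
    Cong d' (Distr.add (.smul a s') r) ∧ Atom s s'

/-- Evaluation  t⃗ ≻≻ t⃗′:  reflexive-transitive closure of one-step evaluation. -/
def Eval : Distr → Distr → Prop := Relation.ReflTransGen Step

/-! ### Value distributions, inner product, norm -/

def IsValT : Term → Prop
  | .val _ => True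
  | _ => False

def IsValD : Distr → Prop
  | .zero => True
  | .single t => IsValT t
  | .add d₁ d₂ => IsValD d₁ ∧ IsValD d₂
  | .smul _ d => IsValD d

/-- The set of closed value distributions. -/
def ClosedValD : Set Distr := {d | IsValD d ∧ fvD d = ∅}

/-- Total coefficient of the pure term `t` in the distribution `d`. -/
noncomputable def coeff : Distr → Term → ℂ
  | .zero, _ => 0
  | .single s, t => if s = t then 1 else 0
  | .add d₁ d₂, t => coeff d₁ t + coeff d₂ t
  | .smul a d, t => a * coeff d t

/-- The domain of a distribution (all pure terms occurring in it, even with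
coefficient 0). -/
noncomputable def domD : Distr → Finset Term
  | .zero => ∅
  | .single t => {t}
  | .add d₁ d₂ => domD d₁ ∪ domD d₂
  | .smul _ d => domD d

/-- The inner product ⟨v⃗|w⃗⟩ on value distributions. -/
noncomputable def innerD (v w : Distr) : ℂ :=
  ∑ t ∈ domD v, (starRingEnd ℂ) (coeff v t) * coeff w t

/-- The pseudo-ℓ²-norm ‖v⃗‖. -/
noncomputable def normD (v : Distr) : ℝ := Real.sqrt (innerD v v).re

/-- The unit sphere S of closed value distributions of norm 1. -/
def Sphere : Set Distr := {d | d ∈ ClosedValD ∧ normD d = 1}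

/-- Span(X): weak linear combinations of elements of X (taken modulo ≡). -/
inductive Span (X : Set Distr) : Distr → Prop where
  | mem {d : Distr} : d ∈ X → Span X d
  | zero : Span X .zero
  | add {d₁ d₂ : Distr} : Span X d₁ → Span X d₂ → Span X (d₁.add d₂)
  | smul (a : ℂ) {d : Distr} : Span X d → Span X (Distr.smul a d)
  | congr {d d' : Distr} : Span X d → Cong d d' → Span X d'

/-! ### Realizability: unitary types -/

/-- t⃗ ⊩ A :  t⃗ evaluates to some vector of ⟦A⟧. -/
def Realizes (A : Set Distr) (t : Distr) : Prop := ∃ v ∈ A, Eval t v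

/-- |A| : the set of (closed) realizers of A. -/
def realizersOf (A : Set Distr) : Set Distr := {t | fvD t = ∅ ∧ Realizes A t}

/-! ### Type constructors -/

def UnitT : Set Distr := {Distr.single (.val .star)}

/-- ♭A : the basis of A. -/
def flatT (X : Set Distr) : Set Distr :=
  {e | ∃ d ∈ X, ∃ v : Val, (Term.val v) ∈ domD d ∧ e = Distr.single (.val v)}

/-- ♯A : the unitary span of A. -/
def sharpT (X : Set Distr) : Set Distr := {d | Span X d ∧ d ∈ Sphere}

/-- Linear extension of a value constructor. -/
def mapVD (f : Val → Val) : Distr → Distr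
  | .zero => .zero
  | .single (.val v) => .single (.val (f v))
  | .single t => .single t
  | .add d₁ d₂ => .add (mapVD f d₁) (mapVD f d₂)
  | .smul a d => .smul a (mapVD f d)

def inlD : Distr → Distr := mapVD Val.inl
def inrD : Distr → Distr := mapVD Val.inr

/-- Bilinear extension of pairing. -/
def pairD : Distr → Distr → Distr
  | .zero, _ => .zero
  | .single (.val v), w => mapVD (Val.pair v) w
  | .single t, _ => .single t
  | .add d₁ d₂, w => .add (pairD d₁ w) (pairD d₂ w)
  | .smul a d, w => .smul a (pairD d w)

/-- A + B (simple sum). -/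
def plusT (A B : Set Distr) : Set Distr :=
  {d | (∃ v ∈ A, d = inlD v) ∨ (∃ w ∈ B, d = inrD w)}

/-- A × B (simple product). -/
def timesT (A B : Set Distr) : Set Distr :=
  {d | ∃ v ∈ A, ∃ w ∈ B, d = pairD v w}

/-- A → B (pure arrow). -/
def arrowT (A B : Set Distr) : Set Distr :=
  {d | ∃ (x : ℕ) (b : Distr), d = Distr.single (.val (.lam x b)) ∧ fvD d = ∅ ∧
      ∀ v ∈ A, Realizes B (bsubst x b v)}

/-- Σᵢ αᵢ · λx.t⃗ᵢ  ↦  Σᵢ αᵢ · t⃗ᵢ  (strips the λx in front of each summand). -/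
def stripLam (x : ℕ) : Distr → Distr
  | .zero => .zero
  | .single (.val (.lam y b)) => if y = x then b else .single (.val (.lam y b))
  | .single t => .single t
  | .add d₁ d₂ => .add (stripLam x d₁) (stripLam x d₂)
  | .smul a d => .smul a (stripLam x d)

/-- A ⇒ B (unitary arrow). -/
def uarrowT (A B : Set Distr) : Set Distr :=
  {d | d ∈ Sphere ∧ ∃ x : ℕ,
      (∀ t ∈ domD d, ∃ b : Distr, t = Term.val (.lam x b)) ∧
      ∀ v ∈ A, Realizes B (bsubst x (stripLam x d) v)}

/-! ### Booleans -/

def ttD : Distr := .single (.val (.inl .star))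
def ffD : Distr := .single (.val (.inr .star))

/-- 𝔹 = 𝕌 + 𝕌. -/
def BoolT : Set Distr := plusT UnitT UnitT

/-- ♯𝔹, the type of unitary Booleans. -/
def sharpBool : Set Distr := sharpT BoolT

/-- Boolean projection π : Span({tt,ff}) → ℂ². -/
noncomputable def piB (d : Distr) : ℂ × ℂ :=
  (coeff d (.val (.inl .star)), coeff d (.val (.inr .star)))

/-- t⃗ represents the operator F : ℂ² → ℂ². -/
def Represents (td : Distr) (F : ℂ × ℂ → ℂ × ℂ) : Prop :=
  ∀ v, Span BoolT v → ∃ w, Span BoolT w ∧ Eval (appD td v) w ∧ piB w = F (piB v)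

/-- Hermitian inner product on ℂ². -/
def hinner (u v : ℂ × ℂ) : ℂ :=
  (starRingEnd ℂ) u.1 * v.1 + (starRingEnd ℂ) u.2 * v.2

/-- A unitary operator on ℂ². -/
def IsUnitaryOp (F : ℂ × ℂ → ℂ × ℂ) : Prop :=
  ∀ u v : ℂ × ℂ, hinner (F u) (F v) = hinner u v

/-! ### Typing contexts, substitutions, judgments -/

abbrev Ctx := List (ℕ × Set Distr)
abbrev Subst := List (ℕ × Distr)

/-- Applying a substitution, one bilinear substitution at a time. -/
def applySub : Distr → Subst → Distr
  | d, [] => d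
  | d, (x, w) :: σ => applySub (bsubst x d w) σ

/-- σ ∈ ⟦Γ⟧. -/
def SubMem (σ : Subst) (Γ : Ctx) : Prop :=
  List.Forall₂ (fun p q => p.1 = q.1 ∧ p.2 ∈ q.2) σ Γ

def ctxDom (Γ : Ctx) : Set ℕ := {x | ∃ A, (x, A) ∈ Γ}

/-- dom♯(Γ): the variables of Γ whose type is not a pure-value type. -/
def ctxDomSharp (Γ : Ctx) : Set ℕ := {x | ∃ A, (x, A) ∈ Γ ∧ flatT A ≠ A}

/-- All the types of the context are unitary types (subsets of the sphere). -/
def CtxUnitary (Γ : Ctx) : Prop := ∀ p ∈ Γ, p.2 ⊆ Sphere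

/-- Validity of the typing judgment  Γ ⊢ t⃗ : A. -/
def ValidJ (Γ : Ctx) (t : Distr) (A : Set Distr) : Prop :=
  ctxDomSharp Γ ⊆ (fvD t : Set ℕ) ∧ (fvD t : Set ℕ) ⊆ ctxDom Γ ∧
  ∀ σ : Subst, SubMem σ Γ → Realizes A (applySub t σ)

/-- Validity of the orthogonality judgment  Γ | Δ₁ ⊢ t⃗₁ ⊥ Δ₂ ⊢ t⃗₂ : A. -/
def OrthoJ (Γ Δ₁ Δ₂ : Ctx) (t₁ t₂ : Distr) (A : Set Distr) : Prop :=
  ValidJ (Γ ++ Δ₁) t₁ A ∧ ValidJ (Γ ++ Δ₂) t₂ A ∧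
  ∀ σ σ₁ σ₂ : Subst, SubMem σ Γ → SubMem σ₁ Δ₁ → SubMem σ₂ Δ₂ →
    ∀ v₁ v₂ : Distr, v₁ ∈ ClosedValD → v₂ ∈ ClosedValD →
      Eval (applySub t₁ (σ ++ σ₁)) v₁ → Eval (applySub t₂ (σ ++ σ₂)) v₂ →
      innerD v₁ v₂ = 0

end LinAlg

namespace LinAlg

lemma coeff_cong {d d' : Distr} (h : Cong d d') : ∀ u, coeff d u = coeff d' u := by
  induction h with
  | addZero d => intro u; simp [coeff]
  | oneSmul d => intro u; simp [coeff]
  | smulSmul a b d => intro u; simp [coeff]; ring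
  | addComm d₁ d₂ => intro u; simp [coeff]; ring
  | addAssoc d₁ d₂ d₃ => intro u; simp [coeff]; ring
  | smulDistrib a b d => intro u; simp [coeff]; ring
  | smulAdd a d₁ d₂ => intro u; simp [coeff]; ring
  | refl d => intro u; rfl
  | symm _ ih => intro u; exact (ih u).symm
  | trans _ _ ih1 ih2 => intro u; exact (ih1 u).trans (ih2 u)
  | addCongr _ _ ih1 ih2 => intro u; simp [coeff, ih1 u, ih2 u]
  | smulCongr a _ ih => intro u; simp [coeff, ih u]

lemma domD_cong {d d' : Distr} (h : Cong d d') : domD d = domD d' := by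
  induction h with
  | addZero d => simp [domD]
  | oneSmul d => simp [domD]
  | smulSmul a b d => simp [domD]
  | addComm d₁ d₂ => simp [domD, Finset.union_comm]
  | addAssoc d₁ d₂ d₃ => simp [domD, Finset.union_assoc]
  | smulDistrib a b d => simp [domD]
  | smulAdd a d₁ d₂ => simp [domD]
  | refl d => rfl
  | symm _ ih => exact ih.symm
  | trans _ _ ih1 ih2 => exact ih1.trans ih2
  | addCongr _ _ ih1 ih2 => simp [domD, ih1, ih2]
  | smulCongr a _ ih => simp [domD, ih]

lemma coeff_eq_zero : ∀ (d : Distr) {u : Term}, u ∉ domD d → coeff d u = 0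
  | .zero, u, _ => rfl
  | .single t, u, h => by
      simp [domD] at h
      simp [coeff, (Ne.symm h : t ≠ u)]
  | .add d₁ d₂, u, h => by
      simp [domD] at h
      simp [coeff, coeff_eq_zero d₁ h.1, coeff_eq_zero d₂ h.2]
  | .smul a d, u, h => by
      simp [domD] at h
      simp [coeff, coeff_eq_zero d h]


open Distr in
lemma cong_double (g : ℂ) : Cong (Distr.smul (g+g) .zero) (Distr.smul g .zero) :=
  (Cong.smulDistrib g g .zero).trans
    ((Cong.smulAdd g .zero .zero).symm.trans (Cong.smulCongr g (Cong.addZero .zero)))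

lemma cong_absorb (u v : ℂ) :
    Cong (Distr.add (.smul u .zero) (.smul v .zero)) (Distr.smul u .zero) := by
  have hsplit : Cong (Distr.smul u .zero) (Distr.add (.smul (u-v) .zero) (.smul v .zero)) := by
    have h := Cong.smulDistrib (u-v) v Distr.zero
    rwa [sub_add_cancel] at h
  have hvv : Cong (Distr.add (.smul v .zero) (.smul v .zero)) (Distr.smul v .zero) :=
    (Cong.smulDistrib v v Distr.zero).symm.trans (cong_double v)
  exact ((Cong.addCongr hsplit (Cong.refl _)).trans
    ((Cong.addAssoc _ _ _).trans
      ((Cong.addCongr (Cong.refl _) hvv).trans hsplit.symm)))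

lemma cong_smul_zero (a : ℂ) : Cong (Distr.smul a .zero) Distr.zero := by
  have hsplit : Cong (Distr.smul 1 .zero) (Distr.add (.smul a .zero) (.smul (1-a) .zero)) := by
    have h := Cong.smulDistrib a (1-a) Distr.zero
    rwa [add_sub_cancel] at h
  exact (hsplit.trans (cong_absorb a (1-a))).symm.trans (Cong.oneSmul _) |>.symm.symm

lemma cong_swap (x y z : Distr) : Cong (x.add (y.add z)) (y.add (x.add z)) :=
  (Cong.addAssoc x y z).symm.trans
    ((Cong.addCongr (Cong.addComm x y) (Cong.refl z)).trans (Cong.addAssoc y x z))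

lemma cong_zero_add (x : Distr) : Cong (Distr.add .zero x) x :=
  (Cong.addComm _ _).trans (Cong.addZero x)

/-- formal linear combination from a list of (coefficient, term) pairs -/
def ofL : List (ℂ × Term) → Distr
  | [] => .zero
  | p :: l => .add (.smul p.1 (.single p.2)) (ofL l)

lemma mem_domD_ofL (l : List (ℂ × Term)) (u : Term) :
    u ∈ domD (ofL l) ↔ u ∈ l.map Prod.snd := by
  induction l with
  | nil => simp [ofL, domD]
  | cons p l ih => simp [ofL, domD, ih, eq_comm]
lemma coeff_ofL_cons (a : ℂ) (t : Term) (l : List (ℂ × Term)) (u : Term) :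
    coeff (ofL ((a, t) :: l)) u = a * (if t = u then 1 else 0) + coeff (ofL l) u := by
  simp [ofL, coeff]

lemma ofL_cons (p : ℂ × Term) (l : List (ℂ × Term)) :
    ofL (p :: l) = Distr.add (.smul p.1 (.single p.2)) (ofL l) := rfl

lemma cong_extract (c : ℂ) (t : Term) :
    ∀ l : List (ℂ × Term),
      Cong (Distr.add (.smul c (.single t)) (ofL l))
        (Distr.add (.smul (c + coeff (ofL l) t) (.single t))
          (ofL (l.filter fun q => q.2 ≠ t)))
  | [] => by
      simp only [ofL, coeff, List.filter_nil, add_zero]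
      exact Cong.refl _
  | (b, v) :: l => by
      by_cases hv : v = t
      · subst hv
        have h1 : Cong (Distr.add (.smul c (.single v)) (ofL ((b, v) :: l)))
            (Distr.add (.smul (c + b) (.single v)) (ofL l)) := by
          rw [ofL_cons]
          exact ((Cong.addAssoc _ _ _).symm).trans
            (Cong.addCongr (Cong.smulDistrib c b _).symm (Cong.refl _))
        have h2 := cong_extract (c + b) v l
        have hs : c + b + coeff (ofL l) v = c + coeff (ofL ((b, v) :: l)) v := by
          simp [coeff_ofL_cons]; ring
        have hf : (((b, v) :: l).filter fun q => q.2 ≠ v) = l.filter fun q => q.2 ≠ v := by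
          simp
        rw [hf, ← hs]
        exact h1.trans h2
      · have h2 := cong_extract c t l
        have hs : coeff (ofL l) t = coeff (ofL ((b, v) :: l)) t := by
          simp [coeff_ofL_cons, hv]
        have hf : (((b, v) :: l).filter fun q => q.2 ≠ t)
            = (b, v) :: (l.filter fun q => q.2 ≠ t) := by
          simp [hv]
        rw [hf, ← hs, ofL_cons, ofL_cons]
        exact (cong_swap _ _ _).trans
          ((Cong.addCongr (Cong.refl _) h2).trans (cong_swap _ _ _))

lemma cong_extract2 : ∀ (l : List (ℂ × Term)) (t : Term), t ∈ l.map Prod.snd →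
    Cong (ofL l)
      (Distr.add (.smul (coeff (ofL l) t) (.single t)) (ofL (l.filter fun q => q.2 ≠ t)))
  | [], t, h => by simp at h
  | (b, v) :: l, t, h => by
      by_cases hv : v = t
      · subst hv
        have h1 := cong_extract b v l
        have hs : b + coeff (ofL l) v = coeff (ofL ((b, v) :: l)) v := by
          simp [coeff_ofL_cons]
        have hf : (((b, v) :: l).filter fun q => q.2 ≠ v) = l.filter fun q => q.2 ≠ v := by
          simp
        rw [hf, ← hs]
        exact h1
      · have ht : t ∈ l.map Prod.snd := by
          simp at h
          rcases h with h | h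
          · exact absurd h.symm hv
          · simpa using h
        have h2 := cong_extract2 l t ht
        have hs : coeff (ofL l) t = coeff (ofL ((b, v) :: l)) t := by
          simp [coeff_ofL_cons, hv]
        have hf : (((b, v) :: l).filter fun q => q.2 ≠ t)
            = (b, v) :: (l.filter fun q => q.2 ≠ t) := by
          simp [hv]
        rw [hf, ← hs, ofL_cons, ofL_cons]
        exact (Cong.addCongr (Cong.refl _) h2).trans (cong_swap _ _ _)
noncomputable def mergeL : List (ℂ × Term) → List (ℂ × Term)
  | [] => []
  | p :: l => (p.1 + coeff (ofL l) p.2, p.2) :: mergeL (l.filter fun q => q.2 ≠ p.2)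
termination_by l => l.length
decreasing_by
  simp
  exact (List.length_filter_le _ _).trans (le_of_eq List.length_attach)

lemma mem_snd_filter (l : List (ℂ × Term)) (t u : Term) :
    u ∈ (l.filter fun q => q.2 ≠ t).map Prod.snd ↔ (u ∈ l.map Prod.snd ∧ u ≠ t) := by
  simp only [List.mem_map, List.mem_filter, decide_eq_true_eq]
  constructor
  · rintro ⟨q, ⟨hq, hne⟩, rfl⟩
    exact ⟨⟨q, hq, rfl⟩, hne⟩
  · rintro ⟨⟨q, hq, rfl⟩, hne⟩
    exact ⟨q, ⟨hq, hne⟩, rfl⟩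

lemma cong_mergeL : ∀ (n : ℕ) (l : List (ℂ × Term)), l.length ≤ n →
    Cong (ofL l) (ofL (mergeL l))
  | 0, [], _ => by rw [mergeL]; exact Cong.refl _
  | n + 1, [], _ => by rw [mergeL]; exact Cong.refl _
  | n + 1, (b, v) :: l, h => by
      have h1 := cong_extract b v l
      have h2 : Cong (ofL (l.filter fun q => q.2 ≠ v))
          (ofL (mergeL (l.filter fun q => q.2 ≠ v))) := by
        refine cong_mergeL n _ ?_
        exact le_trans (List.length_filter_le _ _) (Nat.succ_le_succ_iff.mp h)
      rw [ofL_cons, mergeL, ofL_cons]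
      exact h1.trans (Cong.addCongr (Cong.refl _) h2)

lemma mem_snd_mergeL : ∀ (n : ℕ) (l : List (ℂ × Term)), l.length ≤ n →
    ∀ u, u ∈ (mergeL l).map Prod.snd ↔ u ∈ l.map Prod.snd
  | 0, [], _ => by rw [mergeL]; simp
  | n + 1, [], _ => by rw [mergeL]; simp
  | n + 1, (b, v) :: l, h => by
      intro u
      have hlen : (l.filter fun q => q.2 ≠ v).length ≤ n :=
        le_trans (List.length_filter_le _ _) (Nat.succ_le_succ_iff.mp h)
      have ih := mem_snd_mergeL n _ hlen u
      rw [mergeL]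
      simp only [List.map_cons, List.mem_cons, ih, mem_snd_filter]
      by_cases hu : u = v <;> simp [hu]

lemma nodup_snd_mergeL : ∀ (n : ℕ) (l : List (ℂ × Term)), l.length ≤ n →
    ((mergeL l).map Prod.snd).Nodup
  | 0, [], _ => by rw [mergeL]; simp
  | n + 1, [], _ => by rw [mergeL]; simp
  | n + 1, (b, v) :: l, h => by
      have hlen : (l.filter fun q => q.2 ≠ v).length ≤ n :=
        le_trans (List.length_filter_le _ _) (Nat.succ_le_succ_iff.mp h)
      have ih := nodup_snd_mergeL n _ hlen
      rw [mergeL]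
      simp only [List.map_cons, List.nodup_cons]
      refine ⟨?_, ih⟩
      intro hmem
      rw [mem_snd_mergeL n _ hlen, mem_snd_filter] at hmem
      exact hmem.2 rfl
def toL : Distr → List (ℂ × Term)
  | .zero => []
  | .single t => [(1, t)]
  | .add d₁ d₂ => toL d₁ ++ toL d₂
  | .smul a d => (toL d).map fun p => (a * p.1, p.2)

lemma cong_ofL_append : ∀ l₁ l₂ : List (ℂ × Term),
    Cong (Distr.add (ofL l₁) (ofL l₂)) (ofL (l₁ ++ l₂))
  | [], l₂ => cong_zero_add _
  | p :: l₁, l₂ => by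
      rw [List.cons_append, ofL_cons, ofL_cons]
      exact (Cong.addAssoc _ _ _).trans
        (Cong.addCongr (Cong.refl _) (cong_ofL_append l₁ l₂))

lemma cong_ofL_smul (a : ℂ) : ∀ l : List (ℂ × Term),
    Cong (Distr.smul a (ofL l)) (ofL (l.map fun p => (a * p.1, p.2)))
  | [] => cong_smul_zero a
  | p :: l => by
      rw [List.map_cons, ofL_cons, ofL_cons]
      exact (Cong.smulAdd a _ _).trans
        (Cong.addCongr (Cong.smulSmul a p.1 _) (cong_ofL_smul a l))

lemma cong_toL : ∀ d : Distr, Cong d (ofL (toL d))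
  | .zero => Cong.refl _
  | .single t => by
      rw [toL, ofL_cons]
      exact ((Cong.addZero _).trans (Cong.oneSmul _)).symm
  | .add d₁ d₂ => by
      rw [toL]
      exact (Cong.addCongr (cong_toL d₁) (cong_toL d₂)).trans (cong_ofL_append _ _)
  | .smul a d => by
      rw [toL]
      exact (Cong.smulCongr a (cong_toL d)).trans (cong_ofL_smul a _)

lemma coeff_ofL_filter (t : Term) : ∀ (l : List (ℂ × Term)) (u : Term),
    coeff (ofL (l.filter fun q => q.2 ≠ t)) u
      = if u = t then 0 else coeff (ofL l) u
  | [], u => by simp [ofL, coeff]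
  | (b, v) :: l, u => by
      by_cases hv : v = t
      · subst hv
        have hf : (((b, v) :: l).filter fun q => q.2 ≠ v) = l.filter fun q => q.2 ≠ v := by
          simp
        rw [hf, coeff_ofL_filter v l u, coeff_ofL_cons]
        by_cases hu : u = v
        · simp [hu]
        · simp [hu, (Ne.symm hu : v ≠ u)]
      · have hf : (((b, v) :: l).filter fun q => q.2 ≠ t)
            = (b, v) :: (l.filter fun q => q.2 ≠ t) := by
          simp [hv]
        rw [hf, coeff_ofL_cons, coeff_ofL_filter t l u, coeff_ofL_cons]
        by_cases hu : u = t
        · subst hu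
          simp [fun hh : v = u => hv hh]
        · simp [hu]
lemma coeff_ofL_not_mem {l : List (ℂ × Term)} {u : Term} (h : u ∉ l.map Prod.snd) :
    coeff (ofL l) u = 0 :=
  coeff_eq_zero _ (fun hm => h ((mem_domD_ofL l u).mp hm))

lemma cong_of_eqL : ∀ (n : ℕ) (l l' : List (ℂ × Term)), l.length ≤ n →
    (l.map Prod.snd).Nodup → (l'.map Prod.snd).Nodup →
    (∀ u, coeff (ofL l) u = coeff (ofL l') u) →
    (∀ u, u ∈ l.map Prod.snd ↔ u ∈ l'.map Prod.snd) →
    Cong (ofL l) (ofL l')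
  | n, [], l', _, _, _, hc, hd => by
      have : l' = [] := by
        cases l' with
        | nil => rfl
        | cons p l' => exact absurd ((hd p.2).mpr (by simp)) (by simp)
      subst this
      exact Cong.refl _
  | 0, (b, v) :: l, l', h, _, _, _, _ => by simp at h
  | n + 1, (b, v) :: l, l', h, hn, hn', hc, hd => by
      have hv' : v ∈ l'.map Prod.snd := (hd v).mp (by simp)
      have hmain := cong_extract2 l' v hv'
      simp only [List.map_cons, List.nodup_cons] at hn
      obtain ⟨hvl, hnt⟩ := hn
      have hb : coeff (ofL l') v = b := by
        rw [← hc v, coeff_ofL_cons, coeff_ofL_not_mem hvl]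
        simp
      rw [hb] at hmain
      have hIH : Cong (ofL l) (ofL (l'.filter fun q => q.2 ≠ v)) := by
        refine cong_of_eqL n l _ (Nat.succ_le_succ_iff.mp h) hnt ?_ ?_ ?_
        · exact hn'.sublist ((List.filter_sublist).map Prod.snd)
        · intro u
          rw [coeff_ofL_filter]
          by_cases hu : u = v
          · subst hu
            simp [coeff_ofL_not_mem hvl]
          · rw [if_neg hu, ← hc u, coeff_ofL_cons, if_neg (fun hh => hu hh.symm)]
            ring
        · intro u
          rw [mem_snd_filter]
          by_cases hu : u = v
          · subst hu
            simp [hvl]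
          · have := hd u
            simp [hu] at this
            simp [hu, ← this]
      rw [ofL_cons]
      exact (Cong.addCongr (Cong.refl _) hIH).trans hmain.symm
/-- Completeness: distributions with the same coefficients and the same domain
are congruent. -/
lemma cong_of_coeff_domD {d d' : Distr}
    (hc : ∀ u, coeff d u = coeff d' u)
    (hd : ∀ u, u ∈ domD d ↔ u ∈ domD d') : Cong d d' := by
  have h1 : Cong d (ofL (mergeL (toL d))) :=
    (cong_toL d).trans (cong_mergeL (toL d).length _ le_rfl)
  have h1' : Cong d' (ofL (mergeL (toL d'))) :=
    (cong_toL d').trans (cong_mergeL (toL d').length _ le_rfl)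
  refine h1.trans (Cong.trans ?_ h1'.symm)
  refine cong_of_eqL (mergeL (toL d)).length _ _ le_rfl
    (nodup_snd_mergeL (toL d).length _ le_rfl)
    (nodup_snd_mergeL (toL d').length _ le_rfl) ?_ ?_
  · intro u
    rw [← coeff_cong h1 u, ← coeff_cong h1' u]
    exact hc u
  · intro u
    rw [← mem_domD_ofL, ← mem_domD_ofL, ← domD_cong h1, ← domD_cong h1']
    exact hd u

lemma coeff_ofL_map (g : Term → ℂ) : ∀ (L : List Term), L.Nodup → ∀ u,
    coeff (ofL (L.map fun v => (g v, v))) u = if u ∈ L then g u else 0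
  | [], _, u => by simp [ofL, coeff]
  | v :: L, hN, u => by
      rw [List.map_cons, coeff_ofL_cons,
        coeff_ofL_map g L (List.nodup_cons.mp hN).2 u]
      by_cases hu : u = v
      · subst hu
        simp [(List.nodup_cons.mp hN).1]
      · rw [if_neg (fun hh => hu hh.symm)]
        simp [hu]

lemma mem_domD_ofL_map (g : Term → ℂ) (L : List Term) (u : Term) :
    u ∈ domD (ofL (L.map fun v => (g v, v))) ↔ u ∈ L := by
  rw [mem_domD_ofL]
  simp
/-- Simplifying equalities for α₁·t₁ + s⃗₁ ≡ α₂·t₂ + s⃗₂. -/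
theorem simplifying_equalities (a₁ a₂ : ℂ) (t₁ t₂ : Term) (s₁ s₂ : Distr)
    (h : Cong (Distr.add (.smul a₁ (.single t₁)) s₁)
              (Distr.add (.smul a₂ (.single t₂)) s₂)) :
    (t₁ = t₂ → a₁ = a₂ →
      (Cong s₁ s₂ ∨ Cong s₁ (Distr.add s₂ (.smul 0 (.single t₁))) ∨
        Cong s₂ (Distr.add s₁ (.smul 0 (.single t₁))))) ∧
    (t₁ = t₂ → a₁ ≠ a₂ →
      (Cong s₁ (Distr.add s₂ (.smul (a₂ - a₁) (.single t₁))) ∨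
        Cong s₂ (Distr.add s₁ (.smul (a₁ - a₂) (.single t₁))))) ∧
    (t₁ ≠ t₂ →
      ∃ s₃ : Distr, Cong s₁ (Distr.add s₃ (.smul a₂ (.single t₂))) ∧
        Cong s₂ (Distr.add s₃ (.smul a₁ (.single t₁)))) := by
  have hc : ∀ u, a₁ * (if t₁ = u then (1:ℂ) else 0) + coeff s₁ u
      = a₂ * (if t₂ = u then 1 else 0) + coeff s₂ u := fun u => by
    simpa [coeff] using coeff_cong h u
  have hd : ∀ u, (u = t₁ ∨ u ∈ domD s₁) ↔ (u = t₂ ∨ u ∈ domD s₂) := fun u => by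
    have hd0 := domD_cong h
    simp only [domD] at hd0
    rw [Finset.ext_iff] at hd0
    simpa [Finset.mem_union, Finset.mem_singleton] using hd0 u
  refine ⟨?_, ?_, ?_⟩
  · rintro rfl rfl
    have hc' : ∀ u, coeff s₁ u = coeff s₂ u := fun u => add_left_cancel (hc u)
    by_cases h1 : t₁ ∈ domD s₁ <;> by_cases h2 : t₁ ∈ domD s₂
    · left
      refine cong_of_coeff_domD hc' (fun u => ?_)
      by_cases hu : u = t₁
      · subst hu; simp [h1, h2]
      · have := hd u; simp [hu] at this; exact this
    · right; left
      refine cong_of_coeff_domD (fun u => ?_) (fun u => ?_)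
      · simp [coeff, hc' u]
      · simp only [domD, Finset.mem_union, Finset.mem_singleton]
        by_cases hu : u = t₁
        · simp [hu, h1]
        · have := hd u; simp [hu] at this; simp [hu, this]
    · right; right
      refine cong_of_coeff_domD (fun u => ?_) (fun u => ?_)
      · simp [coeff, hc' u]
      · simp only [domD, Finset.mem_union, Finset.mem_singleton]
        by_cases hu : u = t₁
        · simp [hu, h2]
        · have := hd u; simp [hu] at this; simp [hu, ← this]
    · left
      refine cong_of_coeff_domD hc' (fun u => ?_)
      by_cases hu : u = t₁
      · subst hu; simp [h1, h2]
      · have := hd u; simp [hu] at this; exact this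
  · rintro rfl hne
    have hkey : a₁ + coeff s₁ t₁ = a₂ + coeff s₂ t₁ := by simpa using hc t₁
    have hc' : ∀ u, u ≠ t₁ → coeff s₁ u = coeff s₂ u := fun u hu => by
      have e := hc u
      rw [if_neg (fun hh => hu hh.symm)] at e
      simpa using e
    by_cases h1 : t₁ ∈ domD s₁
    · left
      refine cong_of_coeff_domD (fun u => ?_) (fun u => ?_)
      · simp only [coeff]
        by_cases hu : u = t₁
        · subst hu
          rw [if_pos rfl]
          linear_combination hkey
        · rw [if_neg (fun hh => hu hh.symm), hc' u hu]; ring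
      · simp only [domD, Finset.mem_union, Finset.mem_singleton]
        by_cases hu : u = t₁
        · simp [hu, h1]
        · have := hd u; simp [hu] at this; simp [hu, this]
    · have h2 : t₁ ∈ domD s₂ := by
        by_contra h2
        rw [coeff_eq_zero s₁ h1, coeff_eq_zero s₂ h2] at hkey
        simp at hkey
        exact hne hkey
      right
      refine cong_of_coeff_domD (fun u => ?_) (fun u => ?_)
      · simp only [coeff]
        by_cases hu : u = t₁
        · subst hu
          rw [if_pos rfl]
          linear_combination -hkey
        · rw [if_neg (fun hh => hu hh.symm), hc' u hu]; ring
      · simp only [domD, Finset.mem_union, Finset.mem_singleton]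
        by_cases hu : u = t₁
        · simp [hu, h2]
        · have := hd u; simp [hu] at this; simp [hu, ← this]
  · intro hne
    have ht2 : t₂ ∈ domD s₁ := by
      rcases (hd t₂).mpr (Or.inl rfl) with hx | hx
      · exact absurd hx.symm hne
      · exact hx
    have ht1 : t₁ ∈ domD s₂ := by
      rcases (hd t₁).mp (Or.inl rfl) with hx | hx
      · exact absurd hx hne
      · exact hx
    have hD12 : ∀ u, u ∈ domD s₁ → u ≠ t₂ → u ∈ domD s₂ := fun u hu hne2 => by
      rcases (hd u).mp (Or.inr hu) with hx | hx
      · exact absurd hx hne2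
      · exact hx
    have hD21 : ∀ u, u ∈ domD s₂ → u ≠ t₁ → u ∈ domD s₁ := fun u hu hne1 => by
      rcases (hd u).mpr (Or.inr hu) with hx | hx
      · exact absurd hx hne1
      · exact hx
    set E := domD s₁ ∩ domD s₂ with hE
    set g : Term → ℂ := fun u => coeff s₁ u - a₂ * (if u = t₂ then 1 else 0) with hg
    have hco : ∀ u, coeff (ofL (E.toList.map fun v => (g v, v))) u
        = if u ∈ E then g u else 0 := fun u => by
      rw [coeff_ofL_map g E.toList (Finset.nodup_toList E)]
      simp [Finset.mem_toList]
    have hme : ∀ u, u ∈ domD (ofL (E.toList.map fun v => (g v, v))) ↔ u ∈ E := fun u => by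
      rw [mem_domD_ofL_map]
      simp [Finset.mem_toList]
    have hgE : ∀ u ∈ E, g u = coeff s₁ u - a₂ * (if u = t₂ then 1 else 0) := fun u _ => rfl
    refine ⟨ofL (E.toList.map fun v => (g v, v)), ?_, ?_⟩
    · refine cong_of_coeff_domD (fun u => ?_) (fun u => ?_)
      · simp only [coeff, hco u]; simp only [hg]
        by_cases hu2 : u = t₂
        · subst hu2
          by_cases hm : u ∈ domD s₂
          · have hEm : u ∈ E := Finset.mem_inter.mpr ⟨ht2, hm⟩
            simp [hEm]
          · have hEm : u ∉ E := fun hx => hm (Finset.mem_inter.mp hx).2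
            have e := hc u
            simp [hne, coeff_eq_zero s₂ hm] at e
            simp [hEm, e]
        · by_cases hm : u ∈ domD s₁
          · have hEm : u ∈ E := Finset.mem_inter.mpr ⟨hm, hD12 u hm hu2⟩
            simp [hEm, hu2, Ne.symm hu2]
          · have hEm : u ∉ E := fun hx => hm (Finset.mem_inter.mp hx).1
            simp [hEm, hu2, Ne.symm hu2, coeff_eq_zero s₁ hm]
      · simp only [domD, Finset.mem_union, Finset.mem_singleton, hme u]
        constructor
        · intro hm
          by_cases hu2 : u = t₂
          · exact Or.inr hu2
          · exact Or.inl (Finset.mem_inter.mpr ⟨hm, hD12 u hm hu2⟩)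
        · rintro (hm | rfl)
          · exact (Finset.mem_inter.mp hm).1
          · exact ht2
    · refine cong_of_coeff_domD (fun u => ?_) (fun u => ?_)
      · simp only [coeff, hco u]; simp only [hg]
        by_cases hu1 : u = t₁
        · subst hu1
          have e := hc u
          simp [Ne.symm hne, hne] at e
          by_cases hm : u ∈ domD s₁
          · have hEm : u ∈ E := Finset.mem_inter.mpr ⟨hm, ht1⟩
            simp [hEm, hne]
            linear_combination -e
          · have hEm : u ∉ E := fun hx => hm (Finset.mem_inter.mp hx).1
            simp [hEm, hne, coeff_eq_zero s₁ hm] at e ⊢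
            linear_combination -e
        · by_cases hm : u ∈ domD s₂
          · have hEm : u ∈ E := Finset.mem_inter.mpr ⟨hD21 u hm hu1, hm⟩
            have e := hc u
            simp [hu1, Ne.symm hu1] at e
            by_cases hu2 : u = t₂
            · subst hu2
              simp [hEm, hu1, Ne.symm hu1] at e ⊢
              linear_combination -e
            · simp [hu2, Ne.symm hu2] at e
              simp [hEm, hu1, Ne.symm hu1, hu2, Ne.symm hu2]
              linear_combination -e
          · have hEm : u ∉ E := fun hx => hm (Finset.mem_inter.mp hx).2
            simp [hEm, hu1, Ne.symm hu1, coeff_eq_zero s₂ hm]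
      · simp only [domD, Finset.mem_union, Finset.mem_singleton, hme u]
        constructor
        · intro hm
          by_cases hu1 : u = t₁
          · exact Or.inr hu1
          · exact Or.inl (Finset.mem_inter.mpr ⟨hD21 u hm hu1, hm⟩)
        · rintro (hm | rfl)
          · exact (Finset.mem_inter.mp hm).2
          · exact ht1

end LinAlg
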